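/- If H is a normal subgroup of a finite group G, H has an ordered generating system a₁,…,a_k, and G/H has an ordered generating system b₁H,…,b_lH, then the elements b₁,…,b_l,a₁,…,a_k form an ordered generating system of G. -/

import Mathlib

lemma ogs_split {G : Type*} [Monoid G] {l k : ℕ} (b : Fin l → G) (a : Fin k → G)
    (mb : Fin l → ℕ) (ma : Fin k → ℕ)
    (i : ∀ t : Fin (l + k), Fin (Fin.append mb ma t)) :
    (List.ofFn fun t => Fin.append b a t ^ ((i t : ℕ))).prod
      = (List.ofFn fun j => b j ^ ((i (Fin.castAdd k j) : ℕ))).prod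
        * (List.ofFn fun j => a j ^ ((i (Fin.natAdd l j) : ℕ))).prod := by
  rw [List.ofFn_add, List.prod_append]
  congr 1 <;> simp [Fin.append_left, Fin.append_right, Fin.castAdd]

def IsOGS {G : Type*} [Group G] {n : ℕ} (a : Fin n → G) (m : Fin n → ℕ) : Prop :=
  (∀ k, 0 < m k) ∧
    ∀ g : G, ∃! i : (k : Fin n) → Fin (m k),
      g = (List.ofFn fun k => a k ^ ((i k : ℕ))).prod

def HasOGS (G : Type*) [Group G] : Prop :=
  ∃ (n : ℕ) (a : Fin n → G) (m : Fin n → ℕ), IsOGS a m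

theorem ogs_of_normal_and_quotient {G : Type*} [Group G] [Fintype G]
    (H : Subgroup G) [H.Normal]
    {k l : ℕ} (a : Fin k → H) (ma : Fin k → ℕ) (ha : IsOGS a ma)
    (b : Fin l → G) (mb : Fin l → ℕ)
    (hb : IsOGS (fun j => ((b j : G) : G ⧸ H)) mb) :
    IsOGS (Fin.append b fun j => (a j : G)) (Fin.append mb ma) := by
  obtain ⟨hma, hua⟩ := ha
  obtain ⟨hmb, hub⟩ := hb
  set a' : Fin k → G := fun j => (a j : G) with ha'
  constructor
  · intro t
    induction t using Fin.addCases with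
    | left j => simpa [Fin.append_left] using hmb j
    | right j => simpa [Fin.append_right] using hma j
  · intro g
    obtain ⟨ib, hib, hib'⟩ := hub (g : G ⧸ H)
    set Pb : G := (List.ofFn fun j => b j ^ ((ib j : ℕ))).prod with hPb
    have hq : ∀ (x : G) (i' : ∀ j : Fin l, Fin (mb j)),
        x = (List.ofFn fun j => b j ^ ((i' j : ℕ))).prod →
        (x : G ⧸ H) = (List.ofFn fun j => ((b j : G) : G ⧸ H) ^ ((i' j : ℕ))).prod := by
      intro x i' hx
      have : (QuotientGroup.mk' H) x = _ := congrArg (QuotientGroup.mk' H) hx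
      rw [map_list_prod, List.map_ofFn] at this
      simpa [Function.comp_def] using this
    have hPbq : (g : G ⧸ H) = (Pb : G ⧸ H) := by
      rw [hq Pb ib rfl]; exact hib
    have hmem : Pb⁻¹ * g ∈ H := by
      rw [← QuotientGroup.eq]; exact hPbq.symm
    obtain ⟨ia, hia, hia'⟩ := hua ⟨Pb⁻¹ * g, hmem⟩
    have hcoe : ∀ (x : H) (i' : ∀ j : Fin k, Fin (ma j)),
        x = (List.ofFn fun j => a j ^ ((i' j : ℕ))).prod →
        (x : G) = (List.ofFn fun j => a' j ^ ((i' j : ℕ))).prod := by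
      intro x i' hx
      have : H.subtype x = _ := congrArg H.subtype hx
      rw [map_list_prod, List.map_ofFn] at this
      simpa [ha', Function.comp_def] using this
    refine ⟨fun t => Fin.addCases (motive := fun t => Fin (Fin.append mb ma t))
      (fun j => Fin.cast (Fin.append_left mb ma j).symm (ib j))
      (fun j => Fin.cast (Fin.append_right mb ma j).symm (ia j)) t, ?_, ?_⟩
    · beta_reduce
      rw [ogs_split]
      simp only [Fin.addCases_left, Fin.addCases_right, Fin.coe_cast]
      rw [← hPb, ← hcoe _ ia hia]
      group
    · intro J hJ
      rw [ogs_split] at hJ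
      set Jb : ∀ j : Fin l, Fin (mb j) :=
        fun j => Fin.cast (Fin.append_left mb ma j) (J (Fin.castAdd k j)) with hJb
      set Ja : ∀ j : Fin k, Fin (ma j) :=
        fun j => Fin.cast (Fin.append_right mb ma j) (J (Fin.natAdd l j)) with hJa
      have hJ' : g = (List.ofFn fun j => b j ^ ((Jb j : ℕ))).prod
          * (List.ofFn fun j => a' j ^ ((Ja j : ℕ))).prod := by
        simpa [hJb, hJa] using hJ
      set Qa : G := (List.ofFn fun j => a' j ^ ((Ja j : ℕ))).prod with hQa
      set Qb : G := (List.ofFn fun j => b j ^ ((Jb j : ℕ))).prod with hQb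
      have hQamem : (g : G ⧸ H) = (Qb : G ⧸ H) := by
        have hQaH : Qa ∈ H := by
          rw [hQa, ha']
          exact list_prod_mem (by
            intro x hx
            simp only [List.mem_ofFn] at hx
            obtain ⟨j, rfl⟩ := hx
            exact pow_mem (a j).2 _)
        rw [hJ']
        have : ((Qb * Qa : G) : G ⧸ H) = (Qb : G ⧸ H) * (Qa : G ⧸ H) := rfl
        rw [this, (QuotientGroup.eq_one_iff Qa).2 hQaH, mul_one]
      have hJbib : Jb = ib := hib' Jb (by rw [hQamem]; exact hq Qb Jb rfl)
      have hQbPb : Qb = Pb := by rw [hQb, hPb, hJbib]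
      have hJaia : Ja = ia := by
        apply hia'
        apply Subtype.ext
        rw [hcoe _ Ja rfl, ← hQa]
        show Pb⁻¹ * g = Qa
        rw [hJ', hQbPb]; group
      funext t
      induction t using Fin.addCases with
      | left j =>
        simp only [Fin.addCases_left]
        have := congrFun hJbib j
        apply Fin.ext
        simpa [hJb] using congrArg Fin.val this
      | right j =>
        simp only [Fin.addCases_right]
        have := congrFun hJaia j
        apply Fin.ext
        simpa [hJa] using congrArg Fin.val this
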